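/- Let Σ be a root system in a Euclidean vector space with a fixed positive system Σ⁺ and Weyl group W, and let w ∈ W. For any root α ∈ Σ⁺ ∩ wΣ⁺ there exists a finite sequence α = α₁, α₂, …, α_r of roots in Σ⁺ ∩ wΣ⁺ such that ⟨αᵢ, αᵢ₊₁⟩ ≠ 0 for i = 1, …, r−1 and α_r is a simple root of Σ⁺. -/

import Mathlib

open scoped RealInnerProductSpace

variable {E : Type*} [NormedAddCommGroup E] [InnerProductSpace ℝ E] [FiniteDimensional ℝ E]

/-- A (possibly non-reduced) root system in a Euclidean space: a finite set of nonzero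
vectors, stable under the orthogonal reflections in its elements, with integral Cartan
numbers. -/
structure IsRootSystem (S : Set E) : Prop where
  finite : S.Finite
  ne_zero : ∀ α ∈ S, α ≠ 0
  reflect_mem : ∀ α ∈ S, ∀ β ∈ S, Submodule.reflection (ℝ ∙ α)ᗮ β ∈ S
  integral : ∀ α ∈ S, ∀ β ∈ S, ∃ n : ℤ, 2 * ⟪β, α⟫ / ⟪α, α⟫ = (n : ℝ)

/-- A positive system `P` for the root system `S`. -/
structure IsPositiveSystem (S P : Set E) : Prop where
  subset : P ⊆ S
  mem_or : ∀ α ∈ S, α ∈ P ∨ -α ∈ P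
  not_both : ∀ α ∈ P, -α ∉ P
  add_mem : ∀ α ∈ P, ∀ β ∈ P, α + β ∈ S → α + β ∈ P

/-- A simple root of the positive system `P`: a positive root which is not the sum of two
positive roots. -/
def IsSimpleRoot (P : Set E) (α : E) : Prop :=
  α ∈ P ∧ ¬∃ β ∈ P, ∃ γ ∈ P, α = β + γ

/-- The Weyl group of `S`: the subgroup of the orthogonal group generated by the
reflections in the roots. -/
noncomputable def weylGroup (S : Set E) : Subgroup (E ≃ₗᵢ[ℝ] E) :=
  Subgroup.closure {g | ∃ α ∈ S, g = Submodule.reflection (ℝ ∙ α)ᗮ}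

/-! ### Auxiliary lemmas -/

lemma RS.inner_self_pos'' {x : E} (h : x ≠ 0) : 0 < ⟪x, x⟫ := by
  rw [real_inner_self_eq_norm_sq]
  have : ‖x‖ ≠ 0 := norm_ne_zero_iff.mpr h
  positivity

lemma RS.reflection_formula (α β : E) (hα : α ≠ 0) :
    (Submodule.reflection (ℝ ∙ α)ᗮ β : E) = β - (2 * ⟪α, β⟫ / ⟪α, α⟫) • α := by
  have hαα : ⟪α, α⟫ ≠ 0 := inner_self_ne_zero.mpr hα
  set c : ℝ := ⟪α, β⟫ / ⟪α, α⟫ with hc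
  have hβ : β = (β - c • α) + c • α := by abel
  have hmem : β - c • α ∈ (ℝ ∙ α)ᗮ := by
    rw [Submodule.mem_orthogonal_singleton_iff_inner_right, inner_sub_right,
      real_inner_smul_right]
    rw [hc, div_mul_cancel₀ _ hαα, sub_self]
  have h2 : (2 * ⟪α, β⟫ / ⟪α, α⟫ : ℝ) = c + c := by rw [hc]; ring
  calc Submodule.reflection (ℝ ∙ α)ᗮ β
      = Submodule.reflection (ℝ ∙ α)ᗮ ((β - c • α) + c • α) := by rw [← hβ]
    _ = (β - c • α) + c • (-α) := by
        rw [map_add, map_smul, Submodule.reflection_mem_subspace_eq_self hmem,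
          Submodule.reflection_orthogonalComplement_singleton_eq_neg]
    _ = β - (2 * ⟪α, β⟫ / ⟪α, α⟫) • α := by
        rw [h2, add_smul, smul_neg]; abel

lemma RS.strict_cs {α β : E} (hα0 : α ≠ 0) (hdep : ¬∃ c : ℝ, β = c • α) :
    ⟪α, β⟫ ^ 2 < ⟪α, α⟫ * ⟪β, β⟫ := by
  have hn : ‖α‖ ≠ 0 := norm_ne_zero_iff.mpr hα0
  have h1 : ⟪α, β⟫ < ‖α‖ * ‖β‖ := by
    rw [inner_lt_norm_mul_iff_real]
    intro h
    refine hdep ⟨‖β‖ / ‖α‖, ?_⟩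
    rw [div_eq_mul_inv, mul_comm, mul_smul, h, smul_smul, inv_mul_cancel₀ hn, one_smul]
  have h2 : ⟪α, -β⟫ < ‖α‖ * ‖-β‖ := by
    rw [inner_lt_norm_mul_iff_real]
    intro h
    apply hdep
    refine ⟨-(‖-β‖ / ‖α‖), ?_⟩
    have hβ' : (-β : E) = (‖-β‖ / ‖α‖) • α := by
      rw [div_eq_mul_inv, mul_comm, mul_smul, h, smul_smul, inv_mul_cancel₀ hn, one_smul]
    rw [neg_smul, ← hβ', neg_neg]
  rw [inner_neg_right, norm_neg] at h2
  have habs : |⟪α, β⟫| < ‖α‖ * ‖β‖ := abs_lt.mpr ⟨by linarith, h1⟩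
  calc ⟪α, β⟫ ^ 2 = |⟪α, β⟫| ^ 2 := (sq_abs _).symm
    _ < (‖α‖ * ‖β‖) ^ 2 := by
        have : 0 ≤ |⟪α, β⟫| := abs_nonneg _
        nlinarith
    _ = ⟪α, α⟫ * ⟪β, β⟫ := by
        rw [real_inner_self_eq_norm_mul_norm, real_inner_self_eq_norm_mul_norm]; ring

lemma IsRootSystem.neg_mem' {S : Set E} (hS : IsRootSystem S) {α : E} (h : α ∈ S) : -α ∈ S := by
  have := hS.reflect_mem α h α h
  rwa [Submodule.reflection_orthogonalComplement_singleton_eq_neg] at this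

lemma IsRootSystem.sum_mem' {S : Set E} (hS : IsRootSystem S) {α β : E} (hα : α ∈ S) (hβ : β ∈ S)
    (hneg : ⟪α, β⟫ < 0) (hne : α + β ≠ 0) : α + β ∈ S := by
  have hα0 := hS.ne_zero α hα
  have hβ0 := hS.ne_zero β hβ
  have hαα := RS.inner_self_pos'' hα0
  have hββ := RS.inner_self_pos'' hβ0
  obtain ⟨m, hm⟩ := hS.integral α hα β hβ
  obtain ⟨k, hk⟩ := hS.integral β hβ α hα
  have hmneg : (m : ℝ) < 0 := by
    rw [← hm]
    have : ⟪β, α⟫ < 0 := by rwa [real_inner_comm]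
    exact div_neg_of_neg_of_pos (by linarith) hαα
  have hkneg : (k : ℝ) < 0 := by
    rw [← hk]
    exact div_neg_of_neg_of_pos (by linarith) hββ
  have hm1 : m ≤ -1 := by have : m < 0 := by exact_mod_cast hmneg
                          omega
  have hk1 : k ≤ -1 := by have : k < 0 := by exact_mod_cast hkneg
                          omega
  by_cases hdep : ∃ c : ℝ, β = c • α
  · obtain ⟨c, rfl⟩ := hdep
    have hc0 : c ≠ 0 := by rintro rfl; simp at hβ0
    have hcneg : c < 0 := by
      rcases lt_or_gt_of_ne hc0 with h | h
      · exact h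
      · exfalso
        rw [real_inner_smul_right] at hneg
        nlinarith
    have hmc : (m : ℝ) = 2 * c := by
      rw [← hm, real_inner_smul_left]
      field_simp
    have hkc : (k : ℝ) = 2 / c := by
      rw [← hk, real_inner_smul_right, real_inner_smul_left, real_inner_smul_right]
      rw [div_eq_iff (by positivity : c * (c * ⟪α, α⟫) ≠ 0)]
      field_simp
    have hmk : (m : ℤ) * k = 4 := by
      have : ((m * k : ℤ) : ℝ) = 4 := by push_cast; rw [hmc, hkc]; field_simp; ring
      exact_mod_cast this
    have hcne1 : c ≠ -1 := by
      rintro rfl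
      apply hne
      rw [neg_one_smul]; abel
    have hmne2 : m ≠ -2 := by
      rintro rfl
      apply hcne1
      have : (2 : ℝ) * c = -2 := by rw [← hmc]; norm_num
      linarith
    have hm4 : m = -1 ∨ m = -4 := by
      have h1 : m ≥ -4 := by nlinarith
      interval_cases m <;> omega
    rcases hm4 with rfl | rfl
    · have hcv : c = -(1/2) := by
        have : (2:ℝ) * c = -1 := by rw [← hmc]; norm_num
        linarith
      have heq : α + c • α = -(c • α) := by rw [hcv]; module
      rw [heq]
      exact hS.neg_mem' hβ
    · have hcv : c = -2 := by
        have : (2:ℝ) * c = -4 := by rw [← hmc]; norm_num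
        linarith
      have heq : α + c • α = -α := by rw [hcv]; module
      rw [heq]
      exact hS.neg_mem' hα
  · have hsq := RS.strict_cs hα0 hdep
    have hmk4 : (m : ℤ) * k < 4 := by
      have hr : ((m * k : ℤ) : ℝ) < 4 := by
        push_cast
        have hsym : (⟪β, α⟫ : ℝ) = ⟪α, β⟫ := real_inner_comm α β
        rw [← hm, ← hk, hsym]
        rw [div_mul_div_comm]
        rw [div_lt_iff₀ (by positivity)]
        nlinarith
      exact_mod_cast hr
    have hor : m = -1 ∨ k = -1 := by
      by_contra h
      push_neg at h
      have h1 : m ≤ -2 := by omega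
      have h2 : k ≤ -2 := by omega
      nlinarith
    rcases hor with rfl | rfl
    · have := hS.reflect_mem α hα β hβ
      rw [RS.reflection_formula α β hα0] at this
      have hco : 2 * ⟪α, β⟫ / ⟪α, α⟫ = -1 := by
        rw [show (⟪α, β⟫ : ℝ) = ⟪β, α⟫ from real_inner_comm β α, hm]; norm_num
      rw [hco] at this
      have heq : β - (-1 : ℝ) • α = α + β := by module
      rwa [heq] at this
    · have := hS.reflect_mem β hβ α hα
      rw [RS.reflection_formula β α hβ0] at this
      have hco : 2 * ⟪β, α⟫ / ⟪β, β⟫ = -1 := by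
        rw [show (⟪β, α⟫ : ℝ) = ⟪α, β⟫ from real_inner_comm α β, hk]; norm_num
      rw [hco] at this
      have heq : α - (-1 : ℝ) • β = α + β := by module
      rwa [heq] at this

lemma RS.weyl_image {S : Set E} (hS : IsRootSystem S) (g : E ≃ₗᵢ[ℝ] E) (hg : g ∈ weylGroup S) :
    g '' S = S := by
  induction hg using Subgroup.closure_induction with
  | mem x hx =>
    obtain ⟨α, hα, rfl⟩ := hx
    have h1 : Submodule.reflection (ℝ ∙ α)ᗮ '' S ⊆ S := by
      rintro _ ⟨β, hβ, rfl⟩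
      exact hS.reflect_mem α hα β hβ
    have h2 : (Submodule.reflection (ℝ ∙ α)ᗮ '' S).ncard = S.ncard :=
      Set.ncard_image_of_injective S (Submodule.reflection (ℝ ∙ α)ᗮ).injective
    exact Set.eq_of_subset_of_ncard_le h1 h2.ge hS.finite
  | one => simp
  | mul x y hx hy ihx ihy =>
    have : ⇑(x * y) '' S = ⇑x '' (⇑y '' S) := by
      rw [← Set.image_comp]; rfl
    rw [this, ihy, ihx]
  | inv x hx ih =>
    conv_lhs => rw [← ih]
    rw [← Set.image_comp]
    have h : (⇑(x⁻¹) ∘ ⇑x) = id := by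
      funext v
      show (x⁻¹ : E ≃ₗᵢ[ℝ] E) (x v) = v
      exact x.symm_apply_apply v
    rw [h, Set.image_id]

lemma RS.inner_list_sum_nonneg (x : E) :
    ∀ (t : List E), (∀ y ∈ t, 0 ≤ ⟪x, y⟫) → 0 ≤ ⟪x, t.sum⟫ := by
  intro t
  induction t with
  | nil => simp
  | cons a t ih =>
    intro h
    rw [List.sum_cons, inner_add_right]
    have h1 := ih (fun y hy => h y (List.mem_cons_of_mem _ hy))
    have h2 := h a List.mem_cons_self
    linarith

lemma RS.listSum_ne_zero {S P : Set E} (hS : IsRootSystem S) (hP : IsPositiveSystem S P) :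
    ∀ (n : ℕ) (l : List E), l.length ≤ n → l ≠ [] → (∀ x ∈ l, x ∈ P) → l.sum ≠ 0 := by
  classical
  intro n
  induction n with
  | zero =>
    intro l hlen hne _
    cases l with
    | nil => exact absurd rfl hne
    | cons a t => simp at hlen
  | succ n ih =>
    intro l hlen hne hmem hsum
    match l with
    | [x] =>
      exact hS.ne_zero x (hP.subset (hmem x (by simp))) (by simpa using hsum)
    | x :: y0 :: t0 =>
      set t : List E := y0 :: t0 with ht
      have hx : x ∈ P := hmem x (by simp)
      have hxS : x ∈ S := hP.subset hx
      have hxx : 0 < ⟪x, x⟫ := RS.inner_self_pos'' (hS.ne_zero x hxS)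
      have hsum' : x + t.sum = 0 := by simpa using hsum
      have hinner : ⟪x, t.sum⟫ < 0 := by
        have : ⟪x, x + t.sum⟫ = 0 := by rw [hsum']; simp
        rw [inner_add_right] at this
        linarith
      have hy : ∃ y ∈ t, ⟪x, y⟫ < 0 := by
        by_contra h
        push_neg at h
        exact absurd (RS.inner_list_sum_nonneg x t (fun y hy => h y hy)) (not_le.mpr hinner)
      obtain ⟨y, hyt, hxy⟩ := hy
      have hyP : y ∈ P := hmem y (List.mem_cons_of_mem _ hyt)
      have hne0 : x + y ≠ 0 := by
        intro h
        have : -x = y := by linear_combination (norm := abel) -h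
        exact hP.not_both x hx (this ▸ hyP)
      have hxyS : x + y ∈ S := hS.sum_mem' hxS (hP.subset hyP) hxy hne0
      have hxyP : x + y ∈ P := hP.add_mem x hx y hyP hxyS
      set l' : List E := (x + y) :: t.erase y with hl'
      have hperm : t.Perm (y :: t.erase y) := List.perm_cons_erase hyt
      have hts : t.sum = y + (t.erase y).sum := by rw [hperm.sum_eq, List.sum_cons]
      have hsum'' : l'.sum = 0 := by
        rw [hl', List.sum_cons]
        calc x + y + (t.erase y).sum = x + t.sum := by rw [hts]; abel
          _ = 0 := hsum'
      have hlen' : l'.length ≤ n := by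
        have h1 : (t.erase y).length = t.length - 1 := List.length_erase_of_mem hyt
        have h2 : t.length = t0.length + 1 := by simp [ht]
        have h3 : t0.length + 2 ≤ n + 1 := by simpa [ht] using hlen
        simp only [hl', List.length_cons, h1, h2]
        omega
      refine ih l' hlen' (by simp [hl']) ?_ hsum''
      intro z hz
      rcases List.mem_cons.mp hz with rfl | hz'
      · exact hxyP
      · exact hmem z (List.mem_cons_of_mem _ (List.mem_of_mem_erase hz'))

def RS.Below (P : Set E) (b a : E) : Prop :=
  ∃ l : List E, l ≠ [] ∧ (∀ x ∈ l, x ∈ P) ∧ a = b + l.sum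

lemma RS.below_step {P : Set E} {a b : E} (h : a - b ∈ P) : RS.Below P b a :=
  ⟨[a - b], by simp, by simpa using h, by rw [List.sum_singleton]; abel⟩

lemma RS.below_trans {P : Set E} {a b c : E} (h1 : RS.Below P b a) (h2 : RS.Below P c b) :
    RS.Below P c a := by
  obtain ⟨l₁, hne₁, hmem₁, hsum₁⟩ := h1
  obtain ⟨l₂, hne₂, hmem₂, hsum₂⟩ := h2
  refine ⟨l₂ ++ l₁, by simp [hne₂], ?_, ?_⟩
  · intro x hx
    rcases List.mem_append.mp hx with h | h
    · exact hmem₂ x h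
    · exact hmem₁ x h
  · rw [List.sum_append, hsum₁, hsum₂]; abel

lemma RS.below_irrefl {S P : Set E} (hS : IsRootSystem S) (hP : IsPositiveSystem S P) (a : E) :
    ¬ RS.Below P a a := by
  rintro ⟨l, hne, hmem, hsum⟩
  exact RS.listSum_ne_zero hS hP l.length l le_rfl hne hmem (left_eq_add.mp hsum)

/-- The set of positive roots strictly below `a`. -/
def RS.D (P : Set E) (a : E) : Set E := {x | x ∈ P ∧ RS.Below P x a}

lemma RS.measure_lt {S P : Set E} (hS : IsRootSystem S) (hP : IsPositiveSystem S P) {a b : E}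
    (hb : b ∈ P) (h : RS.Below P b a) : (RS.D P b).ncard < (RS.D P a).ncard := by
  have hsub : RS.D P b ⊆ RS.D P a := fun x hx => ⟨hx.1, RS.below_trans h hx.2⟩
  have hmemb : b ∈ RS.D P a := ⟨hb, h⟩
  have hnot : b ∉ RS.D P b := fun hx => RS.below_irrefl hS hP b hx.2
  refine Set.ncard_lt_ncard ?_ (hS.finite.subset (fun x hx => hP.subset hx.1))
  rw [Set.ssubset_def]
  exact ⟨hsub, fun h' => hnot (h' hmemb)⟩

/-- For any `w` in the Weyl group and any root `α ∈ Σ⁺ ∩ wΣ⁺` there is a finite chain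
`α = α₁, …, α_r` of roots in `Σ⁺ ∩ wΣ⁺` with `⟪αᵢ, αᵢ₊₁⟫ ≠ 0` and `α_r` simple. -/
theorem stmt2 (S : Set E) (hS : IsRootSystem S) (P : Set E) (hP : IsPositiveSystem S P)
    (w : E ≃ₗᵢ[ℝ] E) (hw : w ∈ weylGroup S)
    (α : E) (hα : α ∈ P ∩ (w '' P)) :
    ∃ (r : ℕ) (a : Fin (r + 1) → E), a 0 = α ∧
      (∀ i, a i ∈ P ∩ (w '' P)) ∧
      (∀ i : Fin r, ⟪a i.castSucc, a i.succ⟫ ≠ 0) ∧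
      IsSimpleRoot P (a (Fin.last r)) := by
  -- membership in `w '' P` via `w.symm`
  have hwmem : ∀ x : E, x ∈ w '' P ↔ w.symm x ∈ P := by
    intro x
    constructor
    · rintro ⟨a, ha, rfl⟩
      simpa using ha
    · intro h
      exact ⟨w.symm x, h, by simp⟩
  have hSymmS : ∀ x ∈ S, w.symm x ∈ S := by
    intro x hx
    have himg := RS.weyl_image hS w⁻¹ (inv_mem hw)
    have : (w⁻¹ : E ≃ₗᵢ[ℝ] E) x ∈ (w⁻¹ : E ≃ₗᵢ[ℝ] E) '' S := Set.mem_image_of_mem _ hx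
    rwa [himg] at this
  set Q : Set E := P ∩ (w '' P) with hQdef
  have hQsub : Q ⊆ S := fun x hx => hP.subset hx.1
  -- Q is closed under root addition
  have hQclosed : ∀ x ∈ Q, ∀ y ∈ Q, x + y ∈ S → x + y ∈ Q := by
    intro x hx y hy hxy
    refine ⟨hP.add_mem x hx.1 y hy.1 hxy, ?_⟩
    rw [hwmem]
    have hxP : w.symm x ∈ P := (hwmem x).mp hx.2
    have hyP : w.symm y ∈ P := (hwmem y).mp hy.2
    have : w.symm (x + y) = w.symm x + w.symm y := by simp
    rw [this]
    exact hP.add_mem _ hxP _ hyP (by rw [← this]; exact hSymmS _ hxy)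
  -- the key step
  have hstep : ∀ a b c : E, a ∈ Q → b ∈ Q → c ∈ P → a = b + c →
      (⟪a, b⟫ ≠ 0) ∨ (a + b ∈ Q ∧ ⟪a, a + b⟫ ≠ 0 ∧ ⟪a + b, b⟫ ≠ 0) := by
    intro a b c haQ hbQ hcP hsum
    by_cases hab : ⟪a, b⟫ = 0
    · right
      have hb0 : b ≠ 0 := hS.ne_zero b (hQsub hbQ)
      have ha0 : a ≠ 0 := hS.ne_zero a (hQsub haQ)
      have hbb : (0:ℝ) < ⟪b, b⟫ := RS.inner_self_pos'' hb0
      have haa : (0:ℝ) < ⟪a, a⟫ := RS.inner_self_pos'' ha0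
      have hba : ⟪b, a⟫ = 0 := by rwa [real_inner_comm]
      have hbc : ⟪b, c⟫ = -⟪b, b⟫ := by
        have hc : c = a - b := by rw [hsum]; abel
        rw [hc, inner_sub_right, hba]
        ring
      have habS : a + b ∈ S := by
        have href := hS.reflect_mem b (hQsub hbQ) c (hP.subset hcP)
        rw [RS.reflection_formula b c hb0] at href
        have hco : 2 * ⟪b, c⟫ / ⟪b, b⟫ = -2 := by
          rw [hbc]
          field_simp
        rw [hco] at href
        have heq : c - (-2 : ℝ) • b = a + b := by
          rw [hsum]; module
        rwa [heq] at href
      refine ⟨hQclosed a haQ b hbQ habS, ?_, ?_⟩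
      · rw [inner_add_right, hab, add_zero]
        exact ne_of_gt haa
      · rw [inner_add_left, hab, zero_add]
        exact ne_of_gt hbb
    · exact Or.inl hab
  -- main induction on the number of positive roots below `a`
  have key : ∀ n : ℕ, ∀ a : E, a ∈ Q → (RS.D P a).ncard < n →
      ∃ l : List E, List.Chain' (fun x y => (⟪x, y⟫ : ℝ) ≠ 0) (a :: l) ∧
        (∀ x ∈ a :: l, x ∈ Q) ∧
        IsSimpleRoot P ((a :: l).getLast (List.cons_ne_nil a l)) := by
    intro n
    induction n with
    | zero => intro a _ h; exact absurd h (Nat.not_lt_zero _)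
    | succ n ih =>
      intro a haQ hcard
      by_cases hsimple : IsSimpleRoot P a
      · refine ⟨[], List.isChain_singleton a, ?_, by simpa using hsimple⟩
        intro x hx
        rw [List.mem_singleton] at hx
        rwa [hx]
      · have haP := haQ.1
        have hdecomp : ∃ β ∈ P, ∃ γ ∈ P, a = β + γ := by
          by_contra h
          exact hsimple ⟨haP, h⟩
        obtain ⟨β, hβP, γ, hγP, hsum⟩ := hdecomp
        -- dichotomy: β ∈ w '' P or γ ∈ w '' P
        have hdich : β ∈ w '' P ∨ γ ∈ w '' P := by
          by_contra h
          push_neg at h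
          obtain ⟨h1, h2⟩ := h
          have hβS : β ∈ S := hP.subset hβP
          have hγS : γ ∈ S := hP.subset hγP
          have hβ' : w.symm (-β) ∈ P := by
            rcases hP.mem_or (w.symm β) (hSymmS β hβS) with h | h
            · exact absurd ((hwmem β).mpr h) h1
            · rwa [← map_neg] at h
          have hγ' : w.symm (-γ) ∈ P := by
            rcases hP.mem_or (w.symm γ) (hSymmS γ hγS) with h | h
            · exact absurd ((hwmem γ).mpr h) h2
            · rwa [← map_neg] at h
          have hnegaS : -a ∈ S := hS.neg_mem' (hQsub haQ)
          have hsum2 : w.symm (-β) + w.symm (-γ) = w.symm (-a) := by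
            rw [← map_add]
            congr 1
            rw [hsum]; abel
          have hnegaP : w.symm (-a) ∈ P := by
            rw [← hsum2]
            exact hP.add_mem _ hβ' _ hγ' (by rw [hsum2]; exact hSymmS _ hnegaS)
          have haWP : w.symm a ∈ P := (hwmem a).mp haQ.2
          have : w.symm (-a) = -(w.symm a) := by simp
          rw [this] at hnegaP
          exact hP.not_both _ haWP hnegaP
        -- pick (b, c) with b ∈ Q, c ∈ P, a = b + c
        obtain ⟨b, c, hbQ, hcP, hsumbc⟩ :
            ∃ b c : E, b ∈ Q ∧ c ∈ P ∧ a = b + c := by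
          rcases hdich with h | h
          · exact ⟨β, γ, ⟨hβP, h⟩, hγP, hsum⟩
          · exact ⟨γ, β, ⟨hγP, h⟩, hβP, by rw [hsum]; abel⟩
        have hbelow : RS.Below P b a := RS.below_step (by
          have : a - b = c := by rw [hsumbc]; abel
          rwa [this])
        have hcard' : (RS.D P b).ncard < n := by
          have := RS.measure_lt hS hP hbQ.1 hbelow
          omega
        obtain ⟨l, hchain, hmem, hlast⟩ := ih b hbQ hcard'
        rcases hstep a b c haQ hbQ hcP hsumbc with hab | ⟨habQ, h1, h2⟩
        · refine ⟨b :: l, List.isChain_cons_cons.mpr ⟨hab, hchain⟩, ?_, ?_⟩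
          · intro x hx
            rcases List.mem_cons.mp hx with rfl | hx'
            · exact haQ
            · exact hmem x hx'
          · rwa [List.getLast_cons (List.cons_ne_nil b l)]
        · refine ⟨(a + b) :: b :: l,
            List.isChain_cons_cons.mpr ⟨h1, List.isChain_cons_cons.mpr ⟨h2, hchain⟩⟩, ?_, ?_⟩
          · intro x hx
            rcases List.mem_cons.mp hx with rfl | hx'
            · exact haQ
            · rcases List.mem_cons.mp hx' with rfl | hx''
              · exact habQ
              · exact hmem x hx''
          · rw [List.getLast_cons (List.cons_ne_nil (a + b) (b :: l)),
              List.getLast_cons (List.cons_ne_nil b l)]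
            exact hlast
  -- conclude
  obtain ⟨l, hchain, hmem, hlast⟩ := key ((RS.D P α).ncard + 1) α hα (Nat.lt_succ_self _)
  set L : List E := α :: l with hL
  refine ⟨l.length, fun i => L.get ⟨i, by simpa [hL] using i.isLt⟩, rfl, ?_, ?_, ?_⟩
  · intro i
    exact hmem _ (L.get_mem _)
  · intro i
    have hc := List.isChain_iff_getElem.mp hchain i.val (by simpa [hL] using i.isLt)
    convert hc using 2 <;> rfl
  · have : (Fin.last l.length).val = L.length - 1 := by simp [hL]
    rw [show L.getLast (List.cons_ne_nil α l) = L.get ⟨L.length - 1, by simp [hL]⟩ from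
      List.getLast_eq_getElem _] at hlast
    convert hlast using 2
    exact Fin.ext this
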